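/- If ∑_{j=1}^N θ_j < 0 and ∑_{j≠i} θ_j > 0, and S_i is differentiable and strictly increasing, then ∂π_i/∂θ_i = S_i'(Q(θ_i, p(θ)))·∂Q/∂θ_i + 1/N - 1 < 0 for all N ≥ 2; consequently prosumer i can strictly increase its payoff by decreasing θ_i, so no Nash equilibrium θ̃ exists with ∑_{j≠i} θ̃_j > 0 for some i. -/

import Mathlib

/-- Market clearing price `p(θ) = -(∑ⱼ θⱼ)/(N d_min)`. -/
noncomputable def price (N : ℕ) (dmin : ℝ) (θ : Fin N → ℝ) : ℝ :=
  -(∑ j, θ j) / (N * dmin)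

/-- Strategic payoff `πᵢ(θ) = Sᵢ(Q(θᵢ, p(θ))) - p(θ)·Q(θᵢ, p(θ))` with
`Q(θᵢ, p) = d_min + θᵢ/p`. -/
noncomputable def payoff (N : ℕ) (dmin : ℝ) (S : Fin N → ℝ → ℝ)
    (θ : Fin N → ℝ) (i : Fin N) : ℝ :=
  S i (dmin + θ i / price N dmin θ) - price N dmin θ * (dmin + θ i / price N dmin θ)

/-- The derivative of a monotone differentiable function is nonnegative. -/
lemma aux_mono_deriv_nonneg {f : ℝ → ℝ} {y : ℝ} (hf : Monotone f)
    (hd : DifferentiableAt ℝ f y) : 0 ≤ deriv f y := by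
  have h := hasDerivAt_iff_tendsto_slope.mp hd.hasDerivAt
  have hev : ∀ᶠ t in nhdsWithin y {y}ᶜ, 0 ≤ slope f y t := by
    filter_upwards [eventually_mem_nhdsWithin] with t ht
    rw [slope_def_field, div_nonneg_iff]
    rcases lt_or_gt_of_ne (Set.mem_compl_singleton_iff.mp ht) with h1 | h1
    · exact Or.inr ⟨by linarith [hf h1.le], by linarith⟩
    · exact Or.inl ⟨by linarith [hf h1.le], by linarith⟩
  exact ge_of_tendsto h hev

/-- part of Lemma 1: if `∑ⱼ θⱼ < 0` and `∑_{j≠i} θⱼ > 0`, then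
`∂πᵢ/∂θᵢ < 0`; prosumer `i` can strictly increase its payoff by decreasing
`θᵢ`, so such a `θ` is not a Nash equilibrium. -/
theorem stmt8 (N : ℕ) (hN : 2 ≤ N) (dmin : ℝ) (hd : 0 < dmin) (S : Fin N → ℝ → ℝ)
    (hdiff : ∀ i, Differentiable ℝ (S i)) (hmono : ∀ i, StrictMono (S i))
    (θ : Fin N → ℝ) (i : Fin N) (hsum : ∑ j, θ j < 0)
    (hothers : 0 < ∑ j ∈ Finset.univ.erase i, θ j) :
    deriv (fun t => payoff N dmin S (Function.update θ i t) i) (θ i) < 0 ∧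
    (∃ t : ℝ, t < θ i ∧
      payoff N dmin S θ i < payoff N dmin S (Function.update θ i t) i) ∧
    ¬ (∀ (j : Fin N) (t : ℝ), ∑ k, Function.update θ j t k < 0 →
        payoff N dmin S (Function.update θ j t) j ≤ payoff N dmin S θ j) := by
  classical
  set s : ℝ := ∑ j ∈ Finset.univ.erase i, θ j with hs
  have hNpos : (0:ℝ) < N := by positivity
  have hN2 : (2:ℝ) ≤ N := by exact_mod_cast hN
  have hNd : (0:ℝ) < N * dmin := by positivity
  set x : ℝ := θ i with hxdef
  have hsplit : ∑ j, θ j = x + s := by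
    rw [hxdef, hs, Finset.add_sum_erase _ _ (Finset.mem_univ i)]
  have hx : x + s < 0 := by rw [← hsplit]; exact hsum
  -- sum after an update at i
  have hsumup : ∀ t : ℝ, (∑ k, Function.update θ i t k) = t + s := by
    intro t
    rw [← Finset.add_sum_erase _ _ (Finset.mem_univ i), Function.update_self]
    congr 1
    apply Finset.sum_congr rfl
    intro k hk
    exact Function.update_of_ne (Finset.ne_of_mem_erase hk) _ _
  set f : ℝ → ℝ := fun t => payoff N dmin S (Function.update θ i t) i with hf
  set g : ℝ → ℝ := fun t => S i (dmin - N * dmin * t / (t + s)) + (t + s) / N - t with hg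
  -- f and g agree where t + s < 0
  have hfg : ∀ t : ℝ, t + s < 0 → f t = g t := by
    intro t ht
    have htne : t + s ≠ 0 := ne_of_lt ht
    simp only [hf, hg, payoff, price, hsumup t, Function.update_self]
    have harg : dmin + t / (-(t + s) / (N * dmin)) = dmin - N * dmin * t / (t + s) := by
      rw [div_div_eq_mul_div, div_neg]
      ring
    have harg2 : -(t + s) / (N * dmin) * (dmin - N * dmin * t / (t + s)) = t - (t + s) / N := by
      field_simp
      ring
    rw [harg, harg2]
    ring
  -- derivative of g at x
  set q : ℝ → ℝ := fun t => dmin - N * dmin * t / (t + s) with hq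
  set qd : ℝ := -(N * dmin * s / (x + s) ^ 2) with hqd
  have hxne : x + s ≠ 0 := ne_of_lt hx
  have hqder : HasDerivAt q qd x := by
    have h1 : HasDerivAt (fun t : ℝ => N * dmin * t) (N * dmin) x := by
      simpa using (hasDerivAt_id x).const_mul (N * dmin : ℝ)
    have h2 : HasDerivAt (fun t : ℝ => t + s) 1 x := by
      simpa using (hasDerivAt_id x).add_const s
    have h3 := h1.div h2 hxne
    have h4 := h3.const_sub dmin
    refine HasDerivAt.congr_deriv h4 ?_
    rw [hqd]
    field_simp
    ring
  have hlin : HasDerivAt (fun t : ℝ => (t + s) / N - t) (1 / N - 1) x := by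
    have h2 : HasDerivAt (fun t : ℝ => t + s) 1 x := by
      simpa using (hasDerivAt_id x).add_const s
    have h3 := (h2.div_const (N : ℝ)).sub (hasDerivAt_id x)
    exact h3
  have hScomp : HasDerivAt (fun t => S i (q t)) (deriv (S i) (q x) * qd) x :=
    ((hdiff i (q x)).hasDerivAt).comp x hqder
  have hgder : HasDerivAt g (deriv (S i) (q x) * qd + (1 / N - 1)) x := by
    have h5 := hScomp.add hlin
    refine h5.congr_of_eventuallyEq (Filter.Eventually.of_forall fun t => ?_)
    simp only [hg, hq, Pi.add_apply, add_comm s t]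
    ring
  -- f = g near x
  have hev : f =ᶠ[nhds x] g := by
    have hopen : {t : ℝ | t + s < 0} ∈ nhds x :=
      (isOpen_Iio.preimage (continuous_id.add continuous_const)).mem_nhds hx
    filter_upwards [hopen] with t ht using hfg t ht
  have hfder : HasDerivAt f (deriv (S i) (q x) * qd + (1 / N - 1)) x :=
    hgder.congr_of_eventuallyEq hev
  -- the derivative value is negative
  have hqdneg : qd < 0 := by
    rw [hqd]
    have : (0:ℝ) < N * dmin * s / (x + s) ^ 2 := by positivity
    linarith
  have hSnn : 0 ≤ deriv (S i) (q x) :=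
    aux_mono_deriv_nonneg (hmono i).monotone (hdiff i (q x))
  have hderneg : deriv (S i) (q x) * qd + (1 / N - 1) < 0 := by
    have h1 : deriv (S i) (q x) * qd ≤ 0 := mul_nonpos_of_nonneg_of_nonpos hSnn hqdneg.le
    have h2 : (1:ℝ) / N < 1 := by
      rw [div_lt_one hNpos]; linarith
    exact add_neg_of_nonpos_of_neg h1 (by linarith)
  have hderiv : deriv f x < 0 := by rw [hfder.deriv]; exact hderneg
  -- existence of a profitable deviation
  have hdev : ∃ t : ℝ, t < θ i ∧
      payoff N dmin S θ i < payoff N dmin S (Function.update θ i t) i := by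
    have hslope := hasDerivAt_iff_tendsto_slope.mp hfder
    have hev2 : ∀ᶠ t in nhdsWithin x {x}ᶜ, slope f x t < 0 :=
      hslope.eventually_lt_const hderneg
    have hev3 : ∀ᶠ t in nhdsWithin x (Set.Iio x), slope f x t < 0 :=
      hev2.filter_mono (nhdsWithin_mono x (fun y hy => ne_of_lt hy))
    obtain ⟨t, hts, htx⟩ := (hev3.and eventually_mem_nhdsWithin).exists
    refine ⟨t, htx, ?_⟩
    rw [slope_def_field, div_neg_iff] at hts
    have hfx : payoff N dmin S θ i = f x := by
      rw [hf]
      simp [hxdef, Function.update_eq_self]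
    rw [hfx]
    have hR : payoff N dmin S (Function.update θ i t) i = f t := rfl
    rw [hR]
    have htx' : t < x := hxdef ▸ htx
    rcases hts with ⟨h1, h2⟩ | ⟨h1, h2⟩
    · linarith
    · linarith
  refine ⟨hderiv, hdev, ?_⟩
  intro hnash
  obtain ⟨t, htx, hpay⟩ := hdev
  have hsum' : ∑ k, Function.update θ i t k < 0 := by
    rw [hsumup t]
    have : t < x := htx
    linarith
  exact absurd (hnash i t hsum') (not_le.mpr hpay)
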